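/- For every real c ≥ 1 there exists ε₀ ∈ (0,1) such that for all ε with 0 < ε < ε₀, setting δ = ε^c and n = ⌈1/(ε·ln(1/ε))⌉, one has 2·ln(1/δ)/δ ≤ n^c · (ln n)^{c+2}. (This converts the halting-time bound 2·ln(1/δ)/δ, expressed in terms of the discount rate δ = ε^c, into a time bound of the form n^c·polylog(n) in terms of the input length n chosen by Alice.) -/

import Mathlib

open Real

/-- For every real c ≥ 1 there exists ε₀ ∈ (0,1) such that for all 0 < ε < ε₀,
with δ = ε^c and n = ⌈1/(ε·ln(1/ε))⌉, one has 2·ln(1/δ)/δ ≤ n^c·(ln n)^{c+2}. -/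
theorem halting_time_to_input_length (c : ℝ) (hc : 1 ≤ c) :
    ∃ ε₀ : ℝ, 0 < ε₀ ∧ ε₀ < 1 ∧ ∀ ε : ℝ, 0 < ε → ε < ε₀ →
      2 * Real.log (1 / ε ^ c) / ε ^ c ≤
        ((⌈1 / (ε * Real.log (1 / ε))⌉₊ : ℝ)) ^ c *
          (Real.log (⌈1 / (ε * Real.log (1 / ε))⌉₊ : ℝ)) ^ (c + 2) := by
  have hc0 : (0:ℝ) < c := lt_of_lt_of_le one_pos hc
  set M : ℝ := max (c * (2:ℝ) ^ (c+3)) 16 with hM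
  have hM16 : (16:ℝ) ≤ M := le_max_right _ _
  have hMc : c * (2:ℝ) ^ (c+3) ≤ M := le_max_left _ _
  refine ⟨Real.exp (-M), Real.exp_pos _, ?_, ?_⟩
  · rw [Real.exp_lt_one_iff]; linarith
  intro ε hε hεlt
  set L : ℝ := Real.log (1/ε) with hLdef
  have hLeq : L = -Real.log ε := by rw [hLdef, one_div, Real.log_inv]
  have hML : M < L := by
    have h := Real.log_lt_log hε hεlt
    rw [Real.log_exp] at h
    rw [hLeq]; linarith
  have hL16 : (16:ℝ) < L := lt_of_le_of_lt hM16 hML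
  have hLpos : 0 < L := by linarith
  have hεexp : ε = Real.exp (-L) := by
    rw [hLeq, neg_neg, Real.exp_log hε]
  have hεL1 : ε * L < 1 := by
    rw [hεexp, Real.exp_neg]
    rw [inv_mul_lt_iff₀ (Real.exp_pos L), mul_one]
    calc L < L + 1 := by linarith
      _ ≤ Real.exp L := Real.add_one_le_exp L
  have hεLpos : 0 < ε * L := mul_pos hε hLpos
  set x : ℝ := 1 / (ε * L) with hxdef
  have hxpos : 0 < x := by positivity
  have hx1 : 1 < x := by
    rw [hxdef, one_div]
    exact (one_lt_inv₀ hεLpos).mpr hεL1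
  set N : ℝ := ((⌈x⌉₊ : ℕ) : ℝ) with hNdef
  have hxN : x ≤ N := Nat.le_ceil x
  have hN1 : 1 < N := lt_of_lt_of_le hx1 hxN
  -- log L ≤ L / 2
  have hlogL : Real.log L ≤ L / 2 := by
    have hs := Real.sq_sqrt hLpos.le
    set s := Real.sqrt L with hsdef
    have hs0 : 0 < s := Real.sqrt_pos.mpr hLpos
    have hsle : s ≤ L / 4 := by nlinarith [sq_nonneg (s - 4)]
    have hlog : Real.log L = 2 * Real.log s := by
      rw [hsdef, Real.log_sqrt hLpos.le]; ring
    have := Real.log_le_sub_one_of_pos hs0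
    rw [hlog]; linarith
  -- log x = L - log L
  have hlogx : Real.log x = L - Real.log L := by
    rw [hxdef, one_div, Real.log_inv, Real.log_mul hε.ne' hLpos.ne', hLeq]
    ring
  have hlogN : L / 2 ≤ Real.log N := by
    have h := Real.log_le_log hxpos hxN
    rw [hlogx] at h
    linarith
  -- main monotone step
  have hstep : x ^ c * (L/2) ^ (c+2) ≤ N ^ c * (Real.log N) ^ (c+2) := by
    have h1 : x ^ c ≤ N ^ c := Real.rpow_le_rpow hxpos.le hxN hc0.le
    have h2 : (L/2) ^ (c+2) ≤ (Real.log N) ^ (c+2) :=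
      Real.rpow_le_rpow (by positivity) hlogN (by linarith)
    exact mul_le_mul h1 h2 (Real.rpow_nonneg (by positivity) _)
      (Real.rpow_nonneg (by positivity) _)
  -- rewrite LHS
  have hLHS : Real.log (1 / ε ^ c) = c * L := by
    rw [one_div, Real.log_inv, Real.log_rpow hε, hLeq]; ring
  rw [hLHS]
  refine le_trans ?_ hstep
  rw [div_le_iff₀ (Real.rpow_pos_of_pos hε c)]
  have hxε : x * ε = 1 / L := by
    rw [hxdef]; field_simp
  have key : x ^ c * (L/2) ^ (c+2) * ε ^ c = L * L / (2:ℝ) ^ (c+2) := by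
    have h1 : x ^ c * ε ^ c = (1/L) ^ c := by
      rw [← Real.mul_rpow hxpos.le hε.le, hxε]
    have h2 : ((1:ℝ)/L) ^ c = (L ^ c)⁻¹ := by
      rw [one_div, Real.inv_rpow hLpos.le]
    have h3 : (L/2) ^ (c+2) = L ^ (c+2) / (2:ℝ) ^ (c+2) :=
      Real.div_rpow hLpos.le (by norm_num) _
    have h4 : L ^ (c+2) * (L ^ c)⁻¹ = L * L := by
      rw [Real.rpow_add hLpos]
      rw [mul_comm (L ^ c), mul_assoc, mul_inv_cancel₀ (Real.rpow_pos_of_pos hLpos c).ne']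
      rw [mul_one, show ((2:ℝ):ℝ) = ((2:ℕ):ℝ) by norm_num, Real.rpow_natCast]
      ring
    calc x ^ c * (L/2) ^ (c+2) * ε ^ c
        = (L/2) ^ (c+2) * (x ^ c * ε ^ c) := by ring
      _ = L ^ (c+2) / (2:ℝ) ^ (c+2) * (L ^ c)⁻¹ := by rw [h1, h2, h3]
      _ = L ^ (c+2) * (L ^ c)⁻¹ / (2:ℝ) ^ (c+2) := by ring
      _ = L * L / (2:ℝ) ^ (c+2) := by rw [h4]
  rw [key]
  -- final: 2 * (c * L) ≤ L * L / 2^(c+2), using L ≥ c * 2^(c+3)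
  have hP : (0:ℝ) < (2:ℝ) ^ (c+2) := Real.rpow_pos_of_pos (by norm_num) _
  have h23 : (2:ℝ) ^ (c+3) = 2 * (2:ℝ) ^ (c+2) := by
    rw [show c + 3 = (c+2) + 1 by ring, Real.rpow_add (by norm_num), Real.rpow_one]
    ring
  rw [le_div_iff₀ hP]
  have hLge : c * (2 * (2:ℝ) ^ (c+2)) ≤ L := by rw [← h23]; linarith
  nlinarith [mul_pos hc0 hP, mul_le_mul_of_nonneg_right hLge hLpos.le]
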